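/- Let E be a field of characteristic 0, A an associative unital E-algebra containing elements H, X, Y with HX − XH = 2X, HY − YH = −2Y, XY − YX = H, and C := H² − 2H + 4XY + 1. Let M be a left A-module, and for n ∈ ℤ let M_n := {v ∈ M : H·v = n·v}. Then for every integer k and every m ≥ 0: (1) for all v ∈ M_{k+1}, 4^m · X^m · (Y^m · v) = (∏_{j=0}^{m−1} (C − (k−2j)²)) · v; and (2) for all v ∈ M_{−(k+1)}, 4^m · Y^m · (X^m · v) = (∏_{j=0}^{m−1} (C − (k−2j)²)) · v. -/

import Mathlib

/-- **The basic `sl₂` product identities.**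
Let `E` be a field of characteristic `0`, `A` an associative unital `E`-algebra
containing elements `H`, `X`, `Y` with `HX − XH = 2X`, `HY − YH = −2Y`,
`XY − YX = H`, and `C := H² − 2H + 4XY + 1`. Let `M` be a left `A`-module and
for `n ∈ ℤ` let `M_n := {v : H•v = n•v}`. Then for every `k ∈ ℤ` and `m ≥ 0`:
(1) for `v ∈ M_{k+1}` one has `4^m·Xᵐ·(Yᵐ·v) = (∏_{j=0}^{m−1}(C−(k−2j)²))·v`;
(2) for `v ∈ M_{−(k+1)}` one has `4^m·Yᵐ·(Xᵐ·v) = (∏_{j=0}^{m−1}(C−(k−2j)²))·v`.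
(The product of the pairwise commuting factors `C − (k−2j)²` is taken in the
natural order.) -/
theorem stmt_12 (E : Type*) [Field E] [CharZero E]
    (A : Type*) [Ring A] [Algebra E A] (H X Y : A)
    (hHX : H * X - X * H = 2 * X) (hHY : H * Y - Y * H = -2 * Y)
    (hXY : X * Y - Y * X = H)
    (C : A) (hC : C = H ^ 2 - 2 * H + 4 * (X * Y) + 1)
    (M : Type*) [AddCommGroup M] [Module A M]
    (k : ℤ) (m : ℕ) :
    (∀ v : M, H • v = (k + 1) • v →
      (4 : A) ^ m • X ^ m • Y ^ m • v
        = (((List.range m).map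
            (fun j => C - (((k - 2 * (j : ℤ)) ^ 2 : ℤ) : A))).prod) • v) ∧
    (∀ v : M, H • v = (-(k + 1)) • v →
      (4 : A) ^ m • Y ^ m • X ^ m • v
        = (((List.range m).map
            (fun j => C - (((k - 2 * (j : ℤ)) ^ 2 : ℤ) : A))).prod) • v) := by
  -- the hidden coercion `List ℕ → List ℤ` unfolded
  have hdo : ∀ (l : List ℕ), (do let a ← l; pure ((a:ℤ))) = l.map (fun a : ℕ => (a:ℤ)) := by
    intro l
    rw [show (do let a ← l; pure ((a:ℤ))) = l.flatMap (fun a : ℕ => [(a:ℤ)]) from rfl]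
    exact List.map_eq_flatMap.symm
  -- commutation of C with X and Y
  have hCX : C * X = X * C := by
    have ha : H*X - X*H - 2*X = 0 := by rw [hHX]; exact sub_self _
    have hb : X*Y - Y*X - H = 0 := by rw [hXY]; exact sub_self _
    have key : C*X - X*C
        = (H*X - X*H - 2*X)*H + H*(H*X - X*H - 2*X) - 4*(X*(X*Y - Y*X - H)) := by
      rw [hC]; noncomm_ring
    rw [ha, hb] at key
    simp only [zero_mul, mul_zero, add_zero, sub_zero] at key
    exact sub_eq_zero.mp key
  have hCY : C * Y = Y * C := by
    have hc : H*Y - Y*H + 2*Y = 0 := by rw [hHY]; noncomm_ring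
    have hb : X*Y - Y*X - H = 0 := by rw [hXY]; exact sub_self _
    have key : C*Y - Y*C
        = (H*Y - Y*H + 2*Y)*H + H*(H*Y - Y*H + 2*Y) + 4*((X*Y - Y*X - H)*Y) := by
      rw [hC]; noncomm_ring
    rw [hc, hb] at key
    simp only [zero_mul, mul_zero, add_zero, zero_add] at key
    exact sub_eq_zero.mp key
  have hXC : Commute X C := (hCX : Commute C X).symm
  have hYC : Commute Y C := (hCY : Commute C Y).symm
  -- helpers for moving smuls around
  have csc : ∀ (a : ℤ) (b : A) (w : M), b • ((a:A) • w) = (a:A) • (b • w) := by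
    intro a b w
    rw [smul_smul, smul_smul, (Int.cast_commute a b).eq]
  have sw : ∀ (a b : A), a * b = b * a → ∀ (w : M), a • b • w = b • a • w := by
    intro a b h w
    rw [smul_smul, h, mul_smul]
  -- weight shifts
  have hwY : ∀ (n : ℤ) (v : M), H • v = (n:A) • v →
      H • (Y • v) = ((n - 2 : ℤ):A) • (Y • v) := by
    intro n v hv
    have e : H * Y = Y * H + (-2) * Y := by rw [← hHY]; noncomm_ring
    rw [smul_smul, e, add_smul, mul_smul, mul_smul, hv, csc]
    push_cast
    rw [sub_smul, neg_smul, ← sub_eq_add_neg]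
  have hwX : ∀ (n : ℤ) (v : M), H • v = (n:A) • v →
      H • (X • v) = ((n + 2 : ℤ):A) • (X • v) := by
    intro n v hv
    have e : H * X = X * H + 2 * X := by rw [← hHX]; noncomm_ring
    rw [smul_smul, e, add_smul, mul_smul, mul_smul, hv, csc]
    push_cast
    rw [add_smul]
  -- action of 4XY and 4YX on a weight vector
  have hXYv : ∀ (n : ℤ) (v : M), H • v = (n:A) • v →
      ((4:A) * (X * Y)) • v = (C - (((n-1)^2 : ℤ):A)) • v := by
    intro n v hv
    have e : (4:A) * (X * Y) = C - (H*H - 2*H + 1) := by rw [hC]; noncomm_ring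
    rw [e, sub_smul, sub_smul]
    congr 1
    rw [add_smul, sub_smul, one_smul]
    rw [mul_smul H H v, hv, csc n H v, hv, smul_smul]
    rw [mul_smul (2:A) H v, hv, smul_smul]
    have h : (((n-1)^2 : ℤ):A) = ((n*n - 2*n + 1 : ℤ):A) := congrArg _ (by ring)
    rw [h]
    push_cast
    rw [add_smul, sub_smul, one_smul]
  have hYXv : ∀ (n : ℤ) (v : M), H • v = (n:A) • v →
      ((4:A) * (Y * X)) • v = (C - (((n+1)^2 : ℤ):A)) • v := by
    intro n v hv
    have e : (4:A) * (Y * X) = C - (H*H + 2*H + 1) := by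
      have hb : X*Y - Y*X - H = 0 := by rw [hXY]; exact sub_self _
      have key : (4:A) * (Y * X) - (C - (H*H + 2*H + 1)) = -4*(X*Y - Y*X - H) := by
        rw [hC]; noncomm_ring
      rw [hb, mul_zero] at key
      exact sub_eq_zero.mp key
    rw [e, sub_smul, sub_smul]
    congr 1
    rw [add_smul, add_smul, one_smul]
    rw [mul_smul H H v, hv, csc n H v, hv, smul_smul]
    rw [mul_smul (2:A) H v, hv, smul_smul]
    have h : (((n+1)^2 : ℤ):A) = ((n*n + 2*n + 1 : ℤ):A) := congrArg _ (by ring)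
    rw [h]
    push_cast
    rw [add_smul, add_smul, one_smul]
  -- the main induction, with `k` universally quantified
  have key : ∀ (m : ℕ) (k : ℤ),
      (∀ v : M, H • v = ((k + 1 : ℤ):A) • v →
        (4 : A) ^ m • X ^ m • Y ^ m • v
          = (((List.range m).map
              (fun j => C - (((k - 2 * (j : ℤ)) ^ 2 : ℤ) : A))).prod) • v) ∧
      (∀ v : M, H • v = ((-(k + 1) : ℤ):A) • v →
        (4 : A) ^ m • Y ^ m • X ^ m • v
          = (((List.range m).map
              (fun j => C - (((k - 2 * (j : ℤ)) ^ 2 : ℤ) : A))).prod) • v) := by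
    intro m
    induction m with
    | zero => intro k; constructor <;> intro v _ <;> simp
    | succ m ih =>
      intro k
      set P : A := (((List.range m).map
          (fun j => C - ((((k - 2) - 2 * (j : ℤ)) ^ 2 : ℤ) : A))).prod) with hPdef
      have hPrepr : P = (List.map
          ((fun j => C - ((((k - 2) - 2 * (j : ℤ)) ^ 2 : ℤ) : A)) ∘ (fun a : ℕ => (a:ℤ)))
          (List.range m)).prod := by
        rw [hPdef, hdo, List.map_map]
      have Pshift : (((List.range (m+1)).map
          (fun j => C - (((k - 2 * (j : ℤ)) ^ 2 : ℤ) : A))).prod)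
          = (C - ((k^2 : ℤ):A)) * P := by
        rw [hdo, List.map_map, List.range_succ_eq_map, List.map_cons, List.prod_cons,
          List.map_map, hPrepr]
        congr 1
        · simp only [Function.comp_apply]
          norm_num
        · refine congrArg List.prod ?_
          apply List.map_congr_left
          intro j _
          simp only [Function.comp_apply]
          congr 1
          exact congrArg _ (by push_cast; ring)
      have memP : ∀ x ∈ List.map
          ((fun j => C - ((((k - 2) - 2 * (j : ℤ)) ^ 2 : ℤ) : A)) ∘ (fun a : ℕ => (a:ℤ)))
          (List.range m), ∃ c : ℤ, x = C - (c : A) := by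
        intro x hx
        simp only [List.mem_map, Function.comp_apply] at hx
        obtain ⟨j, -, rfl⟩ := hx
        exact ⟨_, rfl⟩
      have hPX : X * P = P * X := by
        rw [hPrepr]
        refine (Commute.list_prod_right _ X ?_).eq
        intro x hx
        obtain ⟨c, rfl⟩ := memP x hx
        exact hXC.sub_right ((Int.cast_commute c X).symm)
      have hPY : Y * P = P * Y := by
        rw [hPrepr]
        refine (Commute.list_prod_right _ Y ?_).eq
        intro x hx
        obtain ⟨c, rfl⟩ := memP x hx
        exact hYC.sub_right ((Int.cast_commute c Y).symm)
      have hPC : (C - ((k^2 : ℤ):A)) * P = P * (C - ((k^2 : ℤ):A)) := by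
        rw [hPrepr]
        refine (Commute.list_prod_right _ _ ?_).eq
        intro x hx
        obtain ⟨c, rfl⟩ := memP x hx
        exact ((Commute.refl C).sub_right ((Int.cast_commute c C).symm)).sub_left
          (Int.cast_commute _ _)
      have h4P : (4:A) * P = P * 4 := by
        rw [hPrepr]
        exact (Commute.list_prod_right _ _ fun x _ => Commute.ofNat_left 4 x).eq
      have c44 : (4:A)^m * 4 = 4 * (4:A)^m := ((Commute.refl (4:A)).pow_left m).eq
      have c4X : (4:A)^m * X = X * (4:A)^m := ((Commute.ofNat_left 4 X).pow_left m).eq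
      have c4Y : (4:A)^m * Y = Y * (4:A)^m := ((Commute.ofNat_left 4 Y).pow_left m).eq
      constructor
      · intro v hv
        have hv' : H • (Y • v) = (((k - 2) + 1 : ℤ):A) • (Y • v) := by
          rw [show ((k - 2) + 1 : ℤ) = (k + 1) - 2 by ring]
          exact hwY (k+1) v hv
        have hIH := (ih (k-2)).1 (Y • v) hv'
        have h4xy : ((4:A) * (X * Y)) • v = (C - ((k^2 : ℤ):A)) • v := by
          have h := hXYv (k+1) v hv
          rw [show ((k+1-1)^2 : ℤ) = k^2 by ring] at h
          exact h
        calc (4:A)^(m+1) • X^(m+1) • Y^(m+1) • v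
            = (4:A)^m • (4:A) • X • X^m • Y^m • Y • v := by
              rw [pow_succ (4:A), pow_succ' X, pow_succ Y, mul_smul, mul_smul, mul_smul]
          _ = (4:A) • X • (4:A)^m • X^m • Y^m • Y • v := by
              rw [sw _ _ c44, sw _ _ c4X]
          _ = (4:A) • X • P • Y • v := by rw [hIH]
          _ = (4:A) • P • X • Y • v := by rw [sw _ _ hPX]
          _ = P • (4:A) • X • Y • v := by rw [sw _ _ h4P]
          _ = P • ((4:A) * (X * Y)) • v := by rw [mul_smul, mul_smul]
          _ = P • (C - ((k^2 : ℤ):A)) • v := by rw [h4xy]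
          _ = ((C - ((k^2 : ℤ):A)) * P) • v := by rw [smul_smul, ← hPC]
          _ = _ := by rw [Pshift]
      · intro v hv
        have hv' : H • (X • v) = ((-((k - 2) + 1) : ℤ):A) • (X • v) := by
          rw [show (-((k - 2) + 1) : ℤ) = (-(k + 1)) + 2 by ring]
          exact hwX (-(k+1)) v hv
        have hIH := (ih (k-2)).2 (X • v) hv'
        have h4yx : ((4:A) * (Y * X)) • v = (C - ((k^2 : ℤ):A)) • v := by
          have h := hYXv (-(k+1)) v hv
          rw [show ((-(k+1)+1)^2 : ℤ) = k^2 by ring] at h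
          exact h
        calc (4:A)^(m+1) • Y^(m+1) • X^(m+1) • v
            = (4:A)^m • (4:A) • Y • Y^m • X^m • X • v := by
              rw [pow_succ (4:A), pow_succ' Y, pow_succ X, mul_smul, mul_smul, mul_smul]
          _ = (4:A) • Y • (4:A)^m • Y^m • X^m • X • v := by
              rw [sw _ _ c44, sw _ _ c4Y]
          _ = (4:A) • Y • P • X • v := by rw [hIH]
          _ = (4:A) • P • Y • X • v := by rw [sw _ _ hPY]
          _ = P • (4:A) • Y • X • v := by rw [sw _ _ h4P]
          _ = P • ((4:A) * (Y * X)) • v := by rw [mul_smul, mul_smul]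
          _ = P • (C - ((k^2 : ℤ):A)) • v := by rw [h4yx]
          _ = ((C - ((k^2 : ℤ):A)) * P) • v := by rw [smul_smul, ← hPC]
          _ = _ := by rw [Pshift]
  obtain ⟨key1, key2⟩ := key m k
  constructor
  · intro v hv
    rw [← Int.cast_smul_eq_zsmul A] at hv
    exact key1 v hv
  · intro v hv
    rw [← Int.cast_smul_eq_zsmul A] at hv
    exact key2 v hv
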